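/- Let h = sqrt((M₁²−M₂²+α₃²)² + 4M₁²M₂²) and define the Chaplygin variables q_{1,2} = (M₁²+M₂² ± h)/α₃². Then at every point with α₃ ≠ 0, h ≠ 0, and α₁M₁+α₂M₂+α₃M₃ = 0, the Poisson bracket {q₁,q₂} with respect to the e*(3) Lie–Poisson bracket vanishes. -/

import Mathlib

/-- Phase space ℝ⁶ with coordinates (M₁,M₂,M₃,α₁,α₂,α₃) = (x 0,…,x 5). -/
abbrev V6 := Fin 6 → ℝ

/-- Partial derivative of `f` in the `i`-th coordinate direction at `x`. -/
noncomputable def pd (f : V6 → ℝ) (i : Fin 6) (x : V6) : ℝ :=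
  fderiv ℝ f x (Pi.single i 1)

/-- Index of M_i among the 6 coordinates. -/
def Mi (i : Fin 3) : Fin 6 := ⟨i.1, by omega⟩
/-- Index of α_i among the 6 coordinates. -/
def Ai (i : Fin 3) : Fin 6 := ⟨i.1 + 3, by omega⟩

/-- Levi-Civita symbol on {0,1,2}. -/
noncomputable def eps (i j k : Fin 3) : ℝ :=
  ((((i.1 : ℤ) - j.1) * ((j.1 : ℤ) - k.1) * ((k.1 : ℤ) - i.1) : ℤ) : ℝ) / 2

/-- The e*(3) Lie–Poisson bracket:
{f,g} = Σ ε_{ijk} ( M_k ∂f/∂M_i ∂g/∂M_j + α_k (∂f/∂M_i ∂g/∂α_j + ∂f/∂α_i ∂g/∂M_j) ). -/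
noncomputable def pb (f g : V6 → ℝ) (x : V6) : ℝ :=
  ∑ i : Fin 3, ∑ j : Fin 3, ∑ k : Fin 3, eps i j k *
    ( x (Mi k) * pd f (Mi i) x * pd g (Mi j) x
      + x (Ai k) * (pd f (Mi i) x * pd g (Ai j) x + pd f (Ai i) x * pd g (Mi j) x) )

/-- h = sqrt((M₁²−M₂²+α₃²)² + 4M₁²M₂²). -/
noncomputable def hC : V6 → ℝ := fun x =>
  Real.sqrt (((x 0)^2 - (x 1)^2 + (x 5)^2)^2 + 4*(x 0)^2*(x 1)^2)

/-- Chaplygin variable q₁ = (M₁²+M₂²+h)/α₃². -/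
noncomputable def q1 : V6 → ℝ := fun x => ((x 0)^2 + (x 1)^2 + hC x) / (x 5)^2
/-- Chaplygin variable q₂ = (M₁²+M₂²−h)/α₃². -/
noncomputable def q2 : V6 → ℝ := fun x => ((x 0)^2 + (x 1)^2 - hC x) / (x 5)^2

lemma fd_sq {f : V6 → ℝ} {f' : V6 →L[ℝ] ℝ} {x : V6} (h : HasFDerivAt f f' x) :
    HasFDerivAt (fun y => (f y)^2) ((2 * f x) • f') x := by
  have h2 := h.mul h
  have e : (fun y => (f y)^2) = fun y => f y * f y := by funext y; ring
  rw [e, two_mul, add_smul]; exact h2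

set_option maxHeartbeats 1000000 in
/-- The Chaplygin variables commute on the zero level of the Casimir. -/
theorem chaplygin_commute (x : V6) (h5 : x 5 ≠ 0) (hh : hC x ≠ 0)
    (hcas : x 3 * x 0 + x 4 * x 1 + x 5 * x 2 = 0) :
    pb q1 q2 x = 0 := by
  have P : ∀ i : Fin 6, HasFDerivAt (fun y : V6 => y i) (ContinuousLinearMap.proj (R := ℝ) i) x :=
    fun i => by exact (ContinuousLinearMap.proj (R := ℝ) (φ := fun _ : Fin 6 => ℝ) i).hasFDerivAt
  set A : ℝ := ((x 0)^2 - (x 1)^2 + (x 5)^2)^2 + 4*(x 0)^2*(x 1)^2 with hAdef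
  have hA0 : 0 ≤ A := by positivity
  have hAne : A ≠ 0 := by
    intro h0
    exact hh (by rw [hC]; rw [← hAdef, h0, Real.sqrt_zero])
  have hAd :=
    (fd_sq (((fd_sq (P 0)).sub (fd_sq (P 1))).add (fd_sq (P 5)))).add
      (((fd_sq (P 0)).const_mul 4).mul (fd_sq (P 1)))
  have hsq := hAd.sqrt hAne
  have hg : HasDerivAt (fun t : ℝ => (t^2)⁻¹) (-(2 * x 5 ^ 1)/((x 5)^2)^2) (x 5) :=
    (hasDerivAt_pow 2 (x 5)).inv (pow_ne_zero 2 h5)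
  have hinv := hg.comp_hasFDerivAt x (P 5)
  have hq1' := (((fd_sq (P 0)).add (fd_sq (P 1))).add hsq).mul hinv
  have hq2' := (((fd_sq (P 0)).add (fd_sq (P 1))).sub hsq).mul hinv
  have e1 : q1 = (fun y : V6 => ((y 0)^2 + (y 1)^2 + Real.sqrt (((y 0)^2 - (y 1)^2 + (y 5)^2)^2 + 4*(y 0)^2*(y 1)^2)) * (((y 5)^2)⁻¹)) := by
    funext y; simp [q1, hC, div_eq_mul_inv]
  have e2 : q2 = (fun y : V6 => ((y 0)^2 + (y 1)^2 - Real.sqrt (((y 0)^2 - (y 1)^2 + (y 5)^2)^2 + 4*(y 0)^2*(y 1)^2)) * (((y 5)^2)⁻¹)) := by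
    funext y; simp [q2, hC, div_eq_mul_inv]
  simp only [Function.comp_def, Pi.add_def, Pi.sub_def, Pi.mul_def] at hq1' hq2'
  rw [← e1] at hq1'
  rw [← e2] at hq2'
  have f1 : ∀ i : Fin 6, pd q1 i x = (fderiv ℝ q1 x) (Pi.single i 1) := fun i => rfl
  rw [pb]
  simp only [pd, hq1'.fderiv, hq2'.fderiv]
  simp only [Fin.sum_univ_three, eps, Mi, Ai, ContinuousLinearMap.add_apply,
    ContinuousLinearMap.sub_apply, ContinuousLinearMap.smul_apply, ContinuousLinearMap.coe_smul',
    ContinuousLinearMap.proj_apply, smul_eq_mul, Pi.smul_apply, Pi.single_apply]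
  norm_num
  set s := Real.sqrt A with hsdef
  simp only [Fin.ext_iff]
  norm_num
  simp only [show ((0:Fin 6):ℕ)=0 from rfl, show ((1:Fin 6):ℕ)=1 from rfl,
    show ((2:Fin 6):ℕ)=2 from rfl, show ((3:Fin 6):ℕ)=3 from rfl,
    show ((4:Fin 6):ℕ)=4 from rfl, show ((5:Fin 6):ℕ)=5 from rfl,
    show ((⟨2, by omega⟩:Fin 6))=2 from rfl, show ((⟨4, by omega⟩:Fin 6))=4 from rfl,
    show ((⟨5, by omega⟩:Fin 6))=5 from rfl, show ((⟨3, by omega⟩:Fin 6))=3 from rfl]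
  norm_num
  have hs2 : s^2 = A := Real.sq_sqrt hA0
  have hsne : s ≠ 0 := by rw [hsdef]; simp only [hC, ← hAdef] at hh; exact hh
  field_simp
  linear_combination ((-8) * x 0 * x 4 * s + (8) * x 1 * x 3 * s) * hs2 + ((16) * x 0 * x 1 * x 5^2 * s) * hcas
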